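/- Let X, Z : Ω → ℝ^k and Y : Ω → ℝ^m be integrable random vectors on a probability space such that X is independent of Y and Z is independent of Y. Then for every Lipschitz function h : ℝ^k × ℝ^m → ℝ with Lip(h) ≤ 1, one has |E[h(X,Y)] − E[h(Z,Y)]| ≤ sup{|E[g(X)] − E[g(Z)]| : g : ℝ^k → ℝ Lipschitz with Lip(g) ≤ 1}; that is, d_Wass((X,Y),(Z,Y)) ≤ d_Wass(X,Z). -/
import Mathlib

open MeasureTheory ProbabilityTheory

section aux

variable {k m : ℕ}

private lemma lip_slice (h : EuclideanSpace ℝ (Fin k) → EuclideanSpace ℝ (Fin m) → ℝ)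
    (hh : ∀ a a' b b', |h a b - h a' b'| ≤ Real.sqrt (‖a - a'‖ ^ 2 + ‖b - b'‖ ^ 2))
    (y : EuclideanSpace ℝ (Fin m)) : LipschitzWith 1 (fun x => h x y) := by
  apply LipschitzWith.of_dist_le_mul
  intro a a'
  have := hh a a' y y
  simp only [sub_self, norm_zero] at this
  rw [Real.dist_eq, dist_eq_norm, NNReal.coe_one, one_mul]
  simpa [Real.sqrt_sq (norm_nonneg (a - a'))] using this

private lemma cont_h (h : EuclideanSpace ℝ (Fin k) → EuclideanSpace ℝ (Fin m) → ℝ)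
    (hh : ∀ a a' b b', |h a b - h a' b'| ≤ Real.sqrt (‖a - a'‖ ^ 2 + ‖b - b'‖ ^ 2)) :
    Continuous (fun p : EuclideanSpace ℝ (Fin k) × EuclideanSpace ℝ (Fin m) => h p.1 p.2) := by
  apply (LipschitzWith.of_dist_le_mul (K := 2) ?_).continuous
  rintro ⟨a, b⟩ ⟨a', b'⟩
  have h1 := hh a a' b b'
  have h2 : Real.sqrt (‖a - a'‖ ^ 2 + ‖b - b'‖ ^ 2) ≤ ‖a - a'‖ + ‖b - b'‖ := by
    rw [show ‖a - a'‖ + ‖b - b'‖ = Real.sqrt ((‖a - a'‖ + ‖b - b'‖) ^ 2) from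
      (Real.sqrt_sq (by positivity)).symm]
    apply Real.sqrt_le_sqrt
    nlinarith [norm_nonneg (a - a'), norm_nonneg (b - b')]
  have h3 : ‖a - a'‖ ≤ dist (a, b) (a', b') := by
    rw [Prod.dist_eq]; simpa [dist_eq_norm] using le_max_left (dist a a') (dist b b')
  have h4 : ‖b - b'‖ ≤ dist (a, b) (a', b') := by
    rw [Prod.dist_eq]; simpa [dist_eq_norm] using le_max_right (dist a a') (dist b b')
  rw [Real.dist_eq]
  push_cast
  linarith

end aux

/-- if `X, Z : Ω → ℝ^k` are each independent of `Y : Ω → ℝ^m`, then for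
every function `h` on `ℝ^k × ℝ^m` that is 1-Lipschitz for the Euclidean norm,
`|E[h(X,Y)] − E[h(Z,Y)]|` is bounded by the Wasserstein distance between the laws of
`X` and `Z`, i.e. `d_Wass((X,Y),(Z,Y)) ≤ d_Wass(X,Z)`. -/
theorem stmt9 {Ω : Type*} [MeasurableSpace Ω] (P : Measure Ω) [IsProbabilityMeasure P]
    (k m : ℕ)
    (X Z : Ω → EuclideanSpace ℝ (Fin k)) (Y : Ω → EuclideanSpace ℝ (Fin m))
    (hXm : Measurable X) (hZm : Measurable Z) (hYm : Measurable Y)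
    (hXi : Integrable X P) (hZi : Integrable Z P) (hYi : Integrable Y P)
    (hXY : IndepFun X Y P) (hZY : IndepFun Z Y P) :
    ∀ h : EuclideanSpace ℝ (Fin k) → EuclideanSpace ℝ (Fin m) → ℝ,
      (∀ a a' b b', |h a b - h a' b'| ≤ Real.sqrt (‖a - a'‖ ^ 2 + ‖b - b'‖ ^ 2)) →
      |(∫ ω, h (X ω) (Y ω) ∂P) - ∫ ω, h (Z ω) (Y ω) ∂P|
        ≤ sSup {c : ℝ | ∃ g : EuclideanSpace ℝ (Fin k) → ℝ, LipschitzWith 1 g ∧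
            c = |(∫ ω, g (X ω) ∂P) - ∫ ω, g (Z ω) ∂P|} := by
  intro h hh
  set S : Set ℝ := {c : ℝ | ∃ g : EuclideanSpace ℝ (Fin k) → ℝ, LipschitzWith 1 g ∧
      c = |(∫ ω, g (X ω) ∂P) - ∫ ω, g (Z ω) ∂P|} with hS
  -- integrability of 1-Lipschitz compositions
  have key_int : ∀ (g : EuclideanSpace ℝ (Fin k) → ℝ), LipschitzWith 1 g →
      ∀ (W : Ω → EuclideanSpace ℝ (Fin k)), Measurable W → Integrable W P →
      Integrable (fun ω => g (W ω)) P := by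
    intro g hg W hWm hWi
    refine Integrable.mono' (g := fun ω => |g 0| + ‖W ω‖)
      ((integrable_const _).add hWi.norm) (hg.continuous.measurable.comp hWm).aestronglyMeasurable
      (Filter.Eventually.of_forall fun ω => ?_)
    have := hg.dist_le_mul (W ω) 0
    simp only [Real.dist_eq, dist_eq_norm, NNReal.coe_one, one_mul, sub_zero, Real.norm_eq_abs] at this
    calc ‖g (W ω)‖ = |g (W ω) - g 0 + g 0| := by rw [Real.norm_eq_abs]; ring_nf
    _ ≤ |g (W ω) - g 0| + |g 0| := abs_add_le _ _
    _ ≤ |g 0| + ‖W ω‖ := by linarith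
  -- S is bounded above
  have hBdd : BddAbove S := by
    refine ⟨(∫ ω, ‖X ω‖ ∂P) + ∫ ω, ‖Z ω‖ ∂P, ?_⟩
    rintro c ⟨g, hg, rfl⟩
    have hiX := key_int g hg X hXm hXi
    have hiZ := key_int g hg Z hZm hZi
    have bnd : ∀ (W : Ω → EuclideanSpace ℝ (Fin k)), Measurable W → Integrable W P →
        |(∫ ω, g (W ω) ∂P) - g 0| ≤ ∫ ω, ‖W ω‖ ∂P := by
      intro W hWm hWi
      have hiW := key_int g hg W hWm hWi
      have : (∫ ω, g (W ω) ∂P) - g 0 = ∫ ω, (g (W ω) - g 0) ∂P := by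
        rw [integral_sub hiW (integrable_const _), integral_const]
        simp
      rw [this]
      calc |∫ ω, (g (W ω) - g 0) ∂P| ≤ ∫ ω, |g (W ω) - g 0| ∂P := by
            simpa [Real.norm_eq_abs] using
              norm_integral_le_integral_norm (fun ω => g (W ω) - g 0)
        _ ≤ ∫ ω, ‖W ω‖ ∂P := by
            apply integral_mono (hiW.sub (integrable_const _)).abs hWi.norm
            intro ω
            have := hg.dist_le_mul (W ω) 0
            simp only [Real.dist_eq, dist_eq_norm, NNReal.coe_one, one_mul, sub_zero,
              Real.norm_eq_abs] at this
            simpa using this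
    have b1 := bnd X hXm hXi
    have b2 := bnd Z hZm hZi
    calc |(∫ ω, g (X ω) ∂P) - ∫ ω, g (Z ω) ∂P|
        = |((∫ ω, g (X ω) ∂P) - g 0) - ((∫ ω, g (Z ω) ∂P) - g 0)| := by ring_nf
      _ ≤ |(∫ ω, g (X ω) ∂P) - g 0| + |(∫ ω, g (Z ω) ∂P) - g 0| := abs_sub _ _
      _ ≤ (∫ ω, ‖X ω‖ ∂P) + ∫ ω, ‖Z ω‖ ∂P := add_le_add b1 b2
  set μ := P.map X with hμ
  set ν := P.map Z with hν
  set ρ := P.map Y with hρ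
  have hμp : IsProbabilityMeasure μ := Measure.isProbabilityMeasure_map hXm.aemeasurable
  have hνp : IsProbabilityMeasure ν := Measure.isProbabilityMeasure_map hZm.aemeasurable
  have hρp : IsProbabilityMeasure ρ := Measure.isProbabilityMeasure_map hYm.aemeasurable
  have hcont := cont_h h hh
  -- integrability on product measures
  have prod_int : ∀ (W : Ω → EuclideanSpace ℝ (Fin k)), Measurable W → Integrable W P →
      Integrable (fun p : EuclideanSpace ℝ (Fin k) × EuclideanSpace ℝ (Fin m) => h p.1 p.2)
        ((P.map W).prod ρ) := by
    intro W hWm hWi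
    have hWp : IsProbabilityMeasure (P.map W) := Measure.isProbabilityMeasure_map hWm.aemeasurable
    have hWint : Integrable (fun x : EuclideanSpace ℝ (Fin k) => ‖x‖) (P.map W) :=
      (integrable_map_measure continuous_norm.measurable.aestronglyMeasurable
        hWm.aemeasurable).mpr hWi.norm
    have hYint : Integrable (fun y : EuclideanSpace ℝ (Fin m) => ‖y‖) ρ :=
      (integrable_map_measure continuous_norm.measurable.aestronglyMeasurable
        hYm.aemeasurable).mpr hYi.norm
    have hfst : Integrable
        (fun p : EuclideanSpace ℝ (Fin k) × EuclideanSpace ℝ (Fin m) => ‖p.1‖)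
        ((P.map W).prod ρ) := by
      have hm : ((P.map W).prod ρ).map Prod.fst = P.map W := Measure.fst_prod
      exact (integrable_map_measure continuous_norm.measurable.aestronglyMeasurable
        measurable_fst.aemeasurable (μ := (P.map W).prod ρ)).mp (by rwa [hm])
    have hsnd : Integrable
        (fun p : EuclideanSpace ℝ (Fin k) × EuclideanSpace ℝ (Fin m) => ‖p.2‖)
        ((P.map W).prod ρ) := by
      have hm : ((P.map W).prod ρ).map Prod.snd = ρ := Measure.snd_prod
      exact (integrable_map_measure continuous_norm.measurable.aestronglyMeasurable
        measurable_snd.aemeasurable (μ := (P.map W).prod ρ)).mp (by rwa [hm])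
    refine Integrable.mono' (g := fun p => |h 0 0| + (‖p.1‖ + ‖p.2‖))
      ((integrable_const _).add (hfst.add hsnd))
      hcont.measurable.aestronglyMeasurable (Filter.Eventually.of_forall fun p => ?_)
    have h1 := hh p.1 0 p.2 0
    have h2 : Real.sqrt (‖p.1 - 0‖ ^ 2 + ‖p.2 - 0‖ ^ 2) ≤ ‖p.1‖ + ‖p.2‖ := by
      rw [sub_zero, sub_zero, show ‖p.1‖ + ‖p.2‖ = Real.sqrt ((‖p.1‖ + ‖p.2‖) ^ 2) from
        (Real.sqrt_sq (by positivity)).symm]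
      apply Real.sqrt_le_sqrt
      nlinarith [norm_nonneg p.1, norm_nonneg p.2]
    calc ‖h p.1 p.2‖ = |h p.1 p.2 - h 0 0 + h 0 0| := by rw [Real.norm_eq_abs]; ring_nf
      _ ≤ |h p.1 p.2 - h 0 0| + |h 0 0| := abs_add_le _ _
      _ ≤ |h 0 0| + (‖p.1‖ + ‖p.2‖) := by linarith
  have hintX := prod_int X hXm hXi
  have hintZ := prod_int Z hZm hZi
  -- Fubini decomposition
  have decomp : ∀ (W : Ω → EuclideanSpace ℝ (Fin k)), Measurable W → Integrable W P →
      IndepFun W Y P →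
      ∫ ω, h (W ω) (Y ω) ∂P = ∫ y, ∫ x, h x y ∂(P.map W) ∂ρ := by
    intro W hWm hWi hWY
    have hmap : P.map (fun ω => (W ω, Y ω)) = (P.map W).prod ρ :=
      (indepFun_iff_map_prod_eq_prod_map_map hWm.aemeasurable hYm.aemeasurable).mp hWY
    calc ∫ ω, h (W ω) (Y ω) ∂P
        = ∫ p, h p.1 p.2 ∂(P.map (fun ω => (W ω, Y ω))) := by
          rw [integral_map (hWm.prodMk hYm).aemeasurable]
          · rw [hmap]; exact hcont.aestronglyMeasurable
      _ = ∫ p, h p.1 p.2 ∂((P.map W).prod ρ) := by rw [hmap]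
      _ = ∫ y, ∫ x, h x y ∂(P.map W) ∂ρ :=
          integral_prod_symm _ (prod_int W hWm hWi)
  have e1 := decomp X hXm hXi hXY
  have e2 := decomp Z hZm hZi hZY
  rw [e1, e2]
  -- integrability of the slice integrals
  have hF : Integrable (fun y => ∫ x, h x y ∂μ) ρ := by
    have := (hintX.swap).integral_prod_left
    simpa using this
  have hG : Integrable (fun y => ∫ x, h x y ∂ν) ρ := by
    have := (hintZ.swap).integral_prod_left
    simpa using this
  rw [← integral_sub hF hG]
  -- pointwise bound
  have ptwise : ∀ y, |(∫ x, h x y ∂μ) - ∫ x, h x y ∂ν| ≤ sSup S := by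
    intro y
    have hgy := lip_slice h hh y
    have eX : ∫ x, h x y ∂μ = ∫ ω, h (X ω) y ∂P :=
      integral_map hXm.aemeasurable (hgy.continuous.measurable.aestronglyMeasurable)
    have eZ : ∫ x, h x y ∂ν = ∫ ω, h (Z ω) y ∂P :=
      integral_map hZm.aemeasurable (hgy.continuous.measurable.aestronglyMeasurable)
    rw [eX, eZ]
    exact le_csSup hBdd ⟨fun x => h x y, hgy, rfl⟩
  calc |∫ y, ((∫ x, h x y ∂μ) - ∫ x, h x y ∂ν) ∂ρ|
      ≤ ∫ y, |(∫ x, h x y ∂μ) - ∫ x, h x y ∂ν| ∂ρ := by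
        simpa [Real.norm_eq_abs] using norm_integral_le_integral_norm
          (fun y => (∫ x, h x y ∂μ) - ∫ x, h x y ∂ν)
    _ ≤ ∫ _, sSup S ∂ρ :=
        integral_mono (hF.sub hG).abs (integrable_const _) (fun y => ptwise y)
    _ = sSup S := by simp
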